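/- arXiv:2401.00821 — 7 statements merged into one kernel-verified Lean document; each statement's English description precedes it below -/
import Mathlib

section
/- Let L_1, L_2, L_3 be pairwise distinct projective lines in ℂP² all passing through a common point P, and let L_4, L_5, L_6, L_7, L_8 be pairwise distinct projective lines all passing through a common point Q, with P ≠ Q. Assume P does not lie on any of L_4,…,L_8 and Q does not lie on any of L_1, L_2, L_3 (so the two pencils meet transversally in 15 points). Then there exist a ℂ-linear automorphism g of ℂ³ and complex numbers t_1, t_2, t_3, t_4 such that the induced action of g on subspaces maps L_1, L_2, L_3, L_4, L_5, L_6, L_7, L_8 respectively to the lines {Y=0}, {Y-Z=0}, {Y-t_1ated Z=0}, {X=0}, {X-Z=0}, {X-t_2 Z=0}, {X-t_3 Z=0}, {X-t_4 Z=0}. -/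
open Submodule Module

/-- The underlying vector space `ℂ³` for the linear model of `ℂP²`. -/
abbrev Vc : Type := Fin 3 → ℂ

/-- A projective point of `ℂP²`: a 1-dimensional `ℂ`-subspace of `ℂ³`. -/
def IsProjPoint (p : Submodule ℂ Vc) : Prop := Module.finrank ℂ p = 1

/-- A projective line of `ℂP²`: a 2-dimensional `ℂ`-subspace of `ℂ³`. -/
def IsProjLine (L : Submodule ℂ Vc) : Prop := Module.finrank ℂ L = 2

/-- A line arrangement: a finite set of (pairwise distinct) projective lines. -/
def LineArrangement (A : Finset (Submodule ℂ Vc)) : Prop := ∀ L ∈ A, IsProjLine L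

/-- The multiplicity of a projective point `p` with respect to `A`:
the number of lines of `A` containing `p`. -/
noncomputable def mult (A : Finset (Submodule ℂ Vc)) (p : Submodule ℂ Vc) : ℕ :=
  Set.ncard {L : Submodule ℂ Vc | L ∈ A ∧ p ≤ L}

/-- `nPts A r` is the number of projective points of multiplicity exactly `r` w.r.t. `A`. -/
noncomputable def nPts (A : Finset (Submodule ℂ Vc)) (r : ℕ) : ℕ :=
  Set.ncard {p : Submodule ℂ Vc | IsProjPoint p ∧ mult A p = r}

/-- A multiple point of `A`: a projective point of multiplicity at least 3. -/
def IsMultPoint (A : Finset (Submodule ℂ Vc)) (p : Submodule ℂ Vc) : Prop :=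
  IsProjPoint p ∧ 3 ≤ mult A p

/-- `A` is nonreductive if every line of `A` contains at least 3 multiple points of `A`. -/
def Nonreductive (A : Finset (Submodule ℂ Vc)) : Prop :=
  ∀ L ∈ A, 3 ≤ Set.ncard {p : Submodule ℂ Vc | IsMultPoint A p ∧ p ≤ L}

/-- The projective line `{aX + bY + cZ = 0}`. -/
noncomputable def lineEq (a b c : ℂ) : Submodule ℂ Vc :=
  LinearMap.ker (a • (LinearMap.proj 0 : Vc →ₗ[ℂ] ℂ) + b • (LinearMap.proj 1 : Vc →ₗ[ℂ] ℂ)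
    + c • (LinearMap.proj 2 : Vc →ₗ[ℂ] ℂ))

/-- Lattice isomorphism of two arrangements of `n` lines. -/
def LatticeIso (n : ℕ) (A B : Finset (Submodule ℂ Vc)) : Prop :=
  ∃ L H : Fin n → Submodule ℂ Vc,
    Function.Injective L ∧ Function.Injective H ∧
    (∀ M, M ∈ A ↔ ∃ i, L i = M) ∧ (∀ M, M ∈ B ↔ ∃ i, H i = M) ∧
    ∀ S : Finset (Fin n), S.Nonempty →
      Module.finrank ℂ ↥(⨅ i ∈ S, L i) = Module.finrank ℂ ↥(⨅ i ∈ S, H i)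

/-- Projective equivalence of two arrangements. -/
def ProjEquiv (A B : Finset (Submodule ℂ Vc)) : Prop :=
  ∃ g : Vc ≃ₗ[ℂ] Vc,
    (fun M => Submodule.map (g : Vc →ₗ[ℂ] Vc) M) '' (A : Set (Submodule ℂ Vc))
      = (B : Set (Submodule ℂ Vc))


section Helpers

lemma finrank_Vc : Module.finrank ℂ Vc = 3 := by simp [Module.finrank_fin_fun]

lemma exists_gen {P : Submodule ℂ Vc} (hP : IsProjPoint P) :
    ∃ v : Vc, v ≠ 0 ∧ P = span ℂ {v} := by
  obtain ⟨v, hv0, hv⟩ := finrank_eq_one_iff'.mp hP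
  refine ⟨(v : Vc), by simpa using hv0, le_antisymm ?_ ?_⟩
  · intro w hw
    obtain ⟨c, hc⟩ := hv ⟨w, hw⟩
    have h2 := Subtype.ext_iff.mp hc
    simp only [Submodule.coe_smul] at h2
    rw [← h2]
    exact Submodule.smul_mem _ c (subset_span rfl)
  · exact span_le.mpr (by simp)

lemma mem_lineEq {a b c : ℂ} {x : Vc} :
    x ∈ lineEq a b c ↔ a * x 0 + b * x 1 + c * x 2 = 0 := by
  simp [lineEq, LinearMap.mem_ker, smul_eq_mul]

lemma finrank_lineEq {a b c : ℂ} (h : a = 1 ∨ b = 1) :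
    Module.finrank ℂ (lineEq a b c) = 2 := by
  set f := a • (LinearMap.proj 0 : Vc →ₗ[ℂ] ℂ) + b • (LinearMap.proj 1 : Vc →ₗ[ℂ] ℂ)
    + c • (LinearMap.proj 2 : Vc →ₗ[ℂ] ℂ) with hf
  have hsurj : Function.Surjective f := by
    intro y
    rcases h with h | h
    · exact ⟨![y, 0, 0], by simp [hf, h]⟩
    · exact ⟨![0, y, 0], by simp [hf, h]⟩
  have hr : LinearMap.range f = ⊤ := LinearMap.range_eq_top.mpr hsurj
  have hkey := LinearMap.finrank_range_add_finrank_ker f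
  rw [hr, finrank_Vc] at hkey
  simp only [finrank_top, Module.finrank_self] at hkey
  have hkey' : 1 + Module.finrank ℂ ↥(lineEq a b c) = 3 := hkey
  omega

lemma inf_point {L M : Submodule ℂ Vc} (hL : IsProjLine L) (hM : IsProjLine M)
    (hne : L ≠ M) : IsProjPoint (L ⊓ M) := by
  have h1 : Module.finrank ℂ ↥(L ⊔ M) ≤ 3 := by
    have := Submodule.finrank_le (L ⊔ M)
    rwa [finrank_Vc] at this
  have h2 : Module.finrank ℂ L ≤ Module.finrank ℂ ↥(L ⊔ M) :=
    Submodule.finrank_mono le_sup_left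
  have hsup : Module.finrank ℂ ↥(L ⊔ M) = 3 := by
    by_cases h : Module.finrank ℂ ↥(L ⊔ M) = 2
    · exfalso
      have hL' : L = L ⊔ M := eq_of_le_of_finrank_eq le_sup_left (by rw [hL, h])
      have hM' : M = L ⊔ M := eq_of_le_of_finrank_eq le_sup_right (by rw [hM, h])
      exact hne (hL'.trans hM'.symm)
    · rw [hL] at h2; omega
  have hkey := Submodule.finrank_sup_add_finrank_inf_eq L M
  rw [hsup, hL, hM] at hkey
  show Module.finrank ℂ ↥(L ⊓ M) = 1
  omega

lemma pair_indep {x y : Vc} (hy : y ≠ 0) (h : ∀ a : ℂ, a • y ≠ x) :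
    LinearIndependent ℂ ![x, y] :=
  linearIndependent_fin2.mpr ⟨by simpa using hy, by simpa using h⟩

lemma span_pair_eq_line {L : Submodule ℂ Vc} (hL : IsProjLine L) {x y : Vc}
    (hx : x ∈ L) (hy : y ∈ L) (hind : LinearIndependent ℂ ![x, y]) :
    span ℂ {x, y} = L := by
  apply eq_of_le_of_finrank_eq
  · apply span_le.mpr
    rintro z (rfl | rfl)
    · exact hx
    · exact hy
  · have hr : ({x, y} : Set Vc) = Set.range ![x, y] := by
      rw [show Set.range ![x, y] = {y, x} from by simp [Matrix.range_cons, Matrix.range_empty],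
        Set.pair_comm]
    rw [hr, finrank_span_eq_card hind, hL]
    simp

lemma coeff_zero {p q r : Vc} (h : LinearIndependent ℂ ![p, q, r]) {a b c : ℂ}
    (hz : a • p + b • q + c • r = 0) : a = 0 ∧ b = 0 ∧ c = 0 := by
  have := Fintype.linearIndependent_iff.mp h ![a, b, c]
    (by simpa [Fin.sum_univ_three] using hz)
  exact ⟨this 0, this 1, this 2⟩

lemma param_inj {p q r : Vc} (hind : LinearIndependent ℂ ![p, q, r]) {t t' : ℂ}
    (h : span ℂ {p, t • q + r} = span ℂ {p, t' • q + r}) : t = t' := by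
  have hmem : t • q + r ∈ span ℂ {p, t' • q + r} := by
    rw [← h]; exact subset_span (by simp)
  obtain ⟨a, b, heq⟩ := Submodule.mem_span_pair.mp hmem
  have hz : a • p + (b * t' - t) • q + (b - 1) • r = 0 := by
    linear_combination (norm := module) heq
  obtain ⟨ha, hb, hc⟩ := coeff_zero hind hz
  linear_combination t' * hc - hb

lemma pencil_param {p q r : Vc} {N K : Submodule ℂ Vc} (hN : IsProjLine N)
    (hK : IsProjLine K) (hNspan : N = span ℂ {q, r}) (hpK : p ∈ K)
    (hpN : p ∉ N) (hqK : q ∉ K) :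
    ∃ t : ℂ, K = span ℂ {p, t • q + r} := by
  have hKN : K ≠ N := fun h => hpN (h ▸ hpK)
  obtain ⟨w, hw0, hwspan⟩ := exists_gen (inf_point hK hN hKN)
  have hwKN : w ∈ K ⊓ N := hwspan ▸ subset_span rfl
  obtain ⟨hwK, hwN⟩ := Submodule.mem_inf.mp hwKN
  rw [hNspan] at hwN
  obtain ⟨α, β, hαβ⟩ := Submodule.mem_span_pair.mp hwN
  have hβ : β ≠ 0 := by
    rintro rfl
    rw [zero_smul, add_zero] at hαβ
    have hα : α ≠ 0 := fun h => hw0 (by rw [← hαβ, h, zero_smul])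
    exact hqK (by
      have : q = α⁻¹ • w := by rw [← hαβ, smul_smul, inv_mul_cancel₀ hα, one_smul]
      rw [this]; exact Submodule.smul_mem _ _ hwK)
  refine ⟨β⁻¹ * α, ?_⟩
  have hw' : (β⁻¹ * α) • q + r = β⁻¹ • w := by
    rw [← hαβ, smul_add, smul_smul, smul_smul, inv_mul_cancel₀ hβ, one_smul, mul_comm β⁻¹ α, mul_comm α β⁻¹]
  have hw'K : (β⁻¹ * α) • q + r ∈ K := by rw [hw']; exact Submodule.smul_mem _ _ hwK
  have hw'N : (β⁻¹ * α) • q + r ∈ N := by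
    rw [hw', hNspan]
    exact Submodule.smul_mem _ _ (hNspan ▸ hwN)
  have hind : LinearIndependent ℂ ![p, (β⁻¹ * α) • q + r] := by
    apply pair_indep
    · rw [hw']
      exact smul_ne_zero (inv_ne_zero hβ) hw0
    · intro a ha
      exact hpN (ha ▸ Submodule.smul_mem _ _ hw'N)
  exact (span_pair_eq_line hK hpK hw'K hind).symm

end Helpers


lemma map_eq_lineEqY (g : Vc ≃ₗ[ℂ] Vc) {L : Submodule ℂ Vc} (hL : IsProjLine L)
    {x y : Vc} (hspan : L = span ℂ {x, y}) {c t : ℂ}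
    (hgx : g x = c • Pi.basisFun ℂ (Fin 3) 0)
    (hgy : g y = t • Pi.basisFun ℂ (Fin 3) 1 + Pi.basisFun ℂ (Fin 3) 2) :
    Submodule.map (g : Vc →ₗ[ℂ] Vc) L = lineEq 0 1 (-t) := by
  have h1 : Submodule.map (g : Vc →ₗ[ℂ] Vc) L
      = span ℂ {c • Pi.basisFun ℂ (Fin 3) 0,
          t • Pi.basisFun ℂ (Fin 3) 1 + Pi.basisFun ℂ (Fin 3) 2} := by
    rw [hspan, Submodule.map_span, Set.image_pair]
    simp only [LinearEquiv.coe_coe, hgx, hgy]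
  apply eq_of_le_of_finrank_eq
  · rw [h1]
    apply span_le.mpr
    rintro z (rfl | rfl) <;> (rw [SetLike.mem_coe, mem_lineEq]; simp)
  · rw [LinearEquiv.finrank_map_eq, hL, finrank_lineEq (Or.inr rfl)]

lemma map_eq_lineEqX (g : Vc ≃ₗ[ℂ] Vc) {L : Submodule ℂ Vc} (hL : IsProjLine L)
    {x y : Vc} (hspan : L = span ℂ {x, y}) {c t : ℂ}
    (hgx : g x = c • Pi.basisFun ℂ (Fin 3) 1)
    (hgy : g y = t • Pi.basisFun ℂ (Fin 3) 0 + Pi.basisFun ℂ (Fin 3) 2) :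
    Submodule.map (g : Vc →ₗ[ℂ] Vc) L = lineEq 1 0 (-t) := by
  have h1 : Submodule.map (g : Vc →ₗ[ℂ] Vc) L
      = span ℂ {c • Pi.basisFun ℂ (Fin 3) 1,
          t • Pi.basisFun ℂ (Fin 3) 0 + Pi.basisFun ℂ (Fin 3) 2} := by
    rw [hspan, Submodule.map_span, Set.image_pair]
    simp only [LinearEquiv.coe_coe, hgx, hgy]
  apply eq_of_le_of_finrank_eq
  · rw [h1]
    apply span_le.mpr
    rintro z (rfl | rfl) <;> (rw [SetLike.mem_coe, mem_lineEq]; simp)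
  · rw [LinearEquiv.finrank_map_eq, hL, finrank_lineEq (Or.inl rfl)]

/-- Two pencils of 3 and 5 lines meeting transversally can be normalized so that the lines are
`Y=0, Y=Z, Y=t₁Z, X=0, X=Z, X=t₂Z, X=t₃Z, X=t₄Z`. -/
theorem pencil_normalization (P Q : Submodule ℂ Vc) (hP : IsProjPoint P) (hQ : IsProjPoint Q)
    (hPQ : P ≠ Q) (L : Fin 3 → Submodule ℂ Vc) (M : Fin 5 → Submodule ℂ Vc)
    (hL : ∀ i, IsProjLine (L i)) (hM : ∀ j, IsProjLine (M j))
    (hLinj : Function.Injective L) (hMinj : Function.Injective M)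
    (hPL : ∀ i, P ≤ L i) (hQM : ∀ j, Q ≤ M j)
    (hPM : ∀ j, ¬ P ≤ M j) (hQL : ∀ i, ¬ Q ≤ L i) :
    ∃ (g : Vc ≃ₗ[ℂ] Vc) (t1 t2 t3 t4 : ℂ),
      Submodule.map (g : Vc →ₗ[ℂ] Vc) (L 0) = lineEq 0 1 0 ∧
      Submodule.map (g : Vc →ₗ[ℂ] Vc) (L 1) = lineEq 0 1 (-1) ∧
      Submodule.map (g : Vc →ₗ[ℂ] Vc) (L 2) = lineEq 0 1 (-t1) ∧
      Submodule.map (g : Vc →ₗ[ℂ] Vc) (M 0) = lineEq 1 0 0 ∧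
      Submodule.map (g : Vc →ₗ[ℂ] Vc) (M 1) = lineEq 1 0 (-1) ∧
      Submodule.map (g : Vc →ₗ[ℂ] Vc) (M 2) = lineEq 1 0 (-t2) ∧
      Submodule.map (g : Vc →ₗ[ℂ] Vc) (M 3) = lineEq 1 0 (-t3) ∧
      Submodule.map (g : Vc →ₗ[ℂ] Vc) (M 4) = lineEq 1 0 (-t4) := by
  obtain ⟨p, hp0, hPspan⟩ := exists_gen hP
  obtain ⟨q, hq0, hQspan⟩ := exists_gen hQ
  have hpLi : ∀ i, p ∈ L i := fun i => hPL i (hPspan ▸ subset_span rfl)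
  have hqMj : ∀ j, q ∈ M j := fun j => hQM j (hQspan ▸ subset_span rfl)
  have hpMj : ∀ j, p ∉ M j := fun j h =>
    hPM j (hPspan ▸ span_le.mpr (Set.singleton_subset_iff.mpr h))
  have hqLi : ∀ i, q ∉ L i := fun i h =>
    hQL i (hQspan ▸ span_le.mpr (Set.singleton_subset_iff.mpr h))
  have hL0M0 : L 0 ≠ M 0 := fun h => hpMj 0 (h ▸ hpLi 0)
  obtain ⟨r, hr0, hrspan⟩ := exists_gen (inf_point (hL 0) (hM 0) hL0M0)
  have hrmem : r ∈ L 0 ⊓ M 0 := hrspan ▸ subset_span rfl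
  have hrL0 : r ∈ L 0 := hrmem.1
  have hrM0 : r ∈ M 0 := hrmem.2
  have hindqr : LinearIndependent ℂ ![q, r] :=
    pair_indep hr0 (fun a ha => hqLi 0 (ha ▸ Submodule.smul_mem _ a hrL0))
  have hindpr : LinearIndependent ℂ ![p, r] :=
    pair_indep hr0 (fun a ha => hpMj 0 (ha ▸ Submodule.smul_mem _ a hrM0))
  have hM0span : M 0 = span ℂ {q, r} :=
    (span_pair_eq_line (hM 0) (hqMj 0) hrM0 hindqr).symm
  have hL0span : L 0 = span ℂ {p, r} :=
    (span_pair_eq_line (hL 0) (hpLi 0) hrL0 hindpr).symm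
  have hrangeqr : Set.range ![q, r] = {q, r} := by
    simp [Matrix.range_cons, Matrix.range_empty, Set.pair_comm]
  have hrangepr : Set.range ![p, r] = {p, r} := by
    simp [Matrix.range_cons, Matrix.range_empty, Set.pair_comm]
  have hind3 : LinearIndependent ℂ ![p, q, r] := by
    apply linearIndependent_fin_cons.mpr
    refine ⟨hindqr, ?_⟩
    rw [hrangeqr, ← hM0span]
    exact hpMj 0
  have hind3' : LinearIndependent ℂ ![q, p, r] := by
    apply linearIndependent_fin_cons.mpr
    refine ⟨hindpr, ?_⟩
    rw [hrangepr, ← hL0span]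
    exact hqLi 0
  -- parametrize the pencils
  have hparamL : ∀ i, ∃ t : ℂ, L i = span ℂ {p, t • q + r} := fun i =>
    pencil_param (hM 0) (hL i) hM0span (hpLi i) (hpMj 0) (hqLi i)
  have hparamM : ∀ j, ∃ t : ℂ, M j = span ℂ {q, t • p + r} := fun j =>
    pencil_param (hL 0) (hM j) hL0span (hqMj j) (hqLi 0) (hpMj j)
  obtain ⟨s1, hs1⟩ := hparamL 1
  obtain ⟨s2, hs2⟩ := hparamL 2
  obtain ⟨u1, hu1⟩ := hparamM 1
  obtain ⟨u2, hu2⟩ := hparamM 2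
  obtain ⟨u3, hu3⟩ := hparamM 3
  obtain ⟨u4, hu4⟩ := hparamM 4
  have hL0' : L 0 = span ℂ {p, (0 : ℂ) • q + r} := by
    rw [zero_smul, zero_add]; exact hL0span
  have hM0' : M 0 = span ℂ {q, (0 : ℂ) • p + r} := by
    rw [zero_smul, zero_add]; exact hM0span
  have hs1ne : s1 ≠ 0 := by
    rintro rfl
    exact absurd (hLinj (hs1.trans hL0'.symm)) (by decide)
  have hu1ne : u1 ≠ 0 := by
    rintro rfl
    exact absurd (hMinj (hu1.trans hM0'.symm)) (by decide)
  -- build the basis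
  set w : Fin 3 → ℂˣ := ![Units.mk0 u1 hu1ne, Units.mk0 s1 hs1ne, 1] with hw
  have hbind0 : LinearIndependent ℂ (w • ![p, q, r]) := hind3.units_smul w
  have hbeq : w • ![p, q, r] = ![u1 • p, s1 • q, r] := by
    funext i
    fin_cases i <;> simp [hw, Pi.smul_apply']
  rw [hbeq] at hbind0
  have hcard : Fintype.card (Fin 3) = Module.finrank ℂ Vc := by
    rw [finrank_Vc]; simp
  set B : Basis (Fin 3) ℂ Vc := basisOfLinearIndependentOfCardEqFinrank hbind0 hcard with hB
  set g : Vc ≃ₗ[ℂ] Vc := B.equiv (Pi.basisFun ℂ (Fin 3)) (Equiv.refl _) with hgdef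
  have hBi : ∀ i, B i = ![u1 • p, s1 • q, r] i := fun i =>
    congrFun (coe_basisOfLinearIndependentOfCardEqFinrank hbind0 hcard) i
  have hg : ∀ i, g (![u1 • p, s1 • q, r] i) = Pi.basisFun ℂ (Fin 3) i := by
    intro i
    rw [← hBi i, hgdef]
    simpa using B.equiv_apply i (Pi.basisFun ℂ (Fin 3)) (Equiv.refl _)
  have hgp : g p = u1⁻¹ • Pi.basisFun ℂ (Fin 3) 0 := by
    have h0 := hg 0
    simp only [Matrix.cons_val_zero] at h0
    rw [← h0, map_smul, smul_smul, inv_mul_cancel₀ hu1ne, one_smul]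
  have hgq : g q = s1⁻¹ • Pi.basisFun ℂ (Fin 3) 1 := by
    have h1 := hg 1
    simp only [Matrix.cons_val_one, Matrix.head_cons, Matrix.cons_val_zero] at h1
    rw [← h1, map_smul, smul_smul, inv_mul_cancel₀ hs1ne, one_smul]
  have hgr : g r = Pi.basisFun ℂ (Fin 3) 2 := by
    have h2 := hg 2
    simpa using h2
  have hgL : ∀ t : ℂ, g (t • q + r)
      = (t * s1⁻¹) • Pi.basisFun ℂ (Fin 3) 1 + Pi.basisFun ℂ (Fin 3) 2 := fun t => by
    rw [map_add, map_smul, hgq, hgr, smul_smul]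
  have hgM : ∀ t : ℂ, g (t • p + r)
      = (t * u1⁻¹) • Pi.basisFun ℂ (Fin 3) 0 + Pi.basisFun ℂ (Fin 3) 2 := fun t => by
    rw [map_add, map_smul, hgp, hgr, smul_smul]
  refine ⟨g, s2 * s1⁻¹, u2 * u1⁻¹, u3 * u1⁻¹, u4 * u1⁻¹, ?_, ?_, ?_, ?_, ?_, ?_, ?_, ?_⟩
  · have := map_eq_lineEqY g (hL 0) hL0' hgp (hgL 0)
    rw [this]
    norm_num
  · have := map_eq_lineEqY g (hL 1) hs1 hgp (hgL s1)
    rw [this, mul_inv_cancel₀ hs1ne]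
  · exact map_eq_lineEqY g (hL 2) hs2 hgp (hgL s2)
  · have := map_eq_lineEqX g (hM 0) hM0' hgq (hgM 0)
    rw [this]
    norm_num
  · have := map_eq_lineEqX g (hM 1) hu1 hgq (hgM u1)
    rw [this, mul_inv_cancel₀ hu1ne]
  · exact map_eq_lineEqX g (hM 2) hu2 hgq (hgM u2)
  · exact map_eq_lineEqX g (hM 3) hu3 hgq (hgM u3)
  · exact map_eq_lineEqX g (hM 4) hu4 hgq (hgM u4)
end

section
/- There is no nonreductive line arrangement of 12 pairwise distinct lines in ℂP² that has a point of multiplicity exactly 7 and no point of multiplicity at least 8 (i.e., with n_7(A) ≥ 1 and n_r(A) = 0 for all r ≥ 8). -/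
open Submodule Module

lemma uniqLine {q1 q2 L1 L2 : Submodule ℂ Vc} (hq1 : IsProjPoint q1) (hq2 : IsProjPoint q2)
    (hne : q1 ≠ q2) (hL1 : IsProjLine L1) (hL2 : IsProjLine L2)
    (h11 : q1 ≤ L1) (h21 : q2 ≤ L1) (h12 : q1 ≤ L2) (h22 : q2 ≤ L2) : L1 = L2 := by
  have hsup1 : q1 ⊔ q2 ≤ L1 := sup_le h11 h21
  have hsup2 : q1 ⊔ q2 ≤ L2 := sup_le h12 h22
  have hlt : q1 < q1 ⊔ q2 := by
    refine lt_of_le_of_ne le_sup_left ?_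
    intro h
    have hq2le : q2 ≤ q1 := h ▸ le_sup_right
    exact hne (Submodule.eq_of_le_of_finrank_le hq2le (by rw [hq1, hq2])).symm
  have h2 : 2 ≤ Module.finrank ℂ ↥(q1 ⊔ q2) := by
    have := Submodule.finrank_lt_finrank_of_lt hlt
    rw [hq1] at this; omega
  have e1 : L1 = q1 ⊔ q2 :=
    (Submodule.eq_of_le_of_finrank_le hsup1 (by rw [hL1]; exact h2)).symm
  have e2 : L2 = q1 ⊔ q2 :=
    (Submodule.eq_of_le_of_finrank_le hsup2 (by rw [hL2]; exact h2)).symm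
  rw [e1, e2]

lemma mult_eq (A : Finset (Submodule ℂ Vc)) (q : Submodule ℂ Vc)
    [DecidablePred (fun L : Submodule ℂ Vc => q ≤ L)] :
    mult A q = (A.filter fun L => q ≤ L).card := by
  unfold mult
  rw [show {L : Submodule ℂ Vc | L ∈ A ∧ q ≤ L} = ↑(A.filter fun L => q ≤ L) by
    ext L; simp [Finset.mem_filter], Set.ncard_coe_finset]

/-- There is no nonreductive arrangement of 12 lines with a point of multiplicity exactly 7
and no point of multiplicity at least 8. -/
theorem no_nonreductive_with_multiplicity_seven :
    ¬ ∃ A : Finset (Submodule ℂ Vc), LineArrangement A ∧ A.card = 12 ∧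
      Nonreductive A ∧ 1 ≤ nPts A 7 ∧ (∀ r, 8 ≤ r → nPts A r = 0) := by
  classical
  rintro ⟨A, hA, hcard, hnr, h7, -⟩
  obtain ⟨p, hpp, hmp⟩ :=
    Set.nonempty_of_ncard_ne_zero (s := {p : Submodule ℂ Vc | IsProjPoint p ∧ mult A p = 7})
      (by unfold nPts at h7; omega)
  set P : Finset (Submodule ℂ Vc) := A.filter (fun L => p ≤ L) with hPdef
  set Q : Finset (Submodule ℂ Vc) := A.filter (fun L => ¬ p ≤ L) with hQdef
  have hP : P.card = 7 := by rw [← mult_eq]; exact hmp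
  have hQ : Q.card = 5 := by
    have := Finset.card_filter_add_card_filter_not
      (s := A) (p := fun L => p ≤ L)
    rw [hcard, ← hPdef, ← hQdef] at this; omega
  -- the finite sets of multiple points ≠ p on each line
  set T : Submodule ℂ Vc → Finset (Submodule ℂ Vc) := fun L =>
    if h : ({q : Submodule ℂ Vc | IsMultPoint A q ∧ q ≤ L}).Finite
    then h.toFinset.erase p else ∅ with hTdef
  have hTmem : ∀ L q, q ∈ T L → q ≠ p ∧ IsMultPoint A q ∧ q ≤ L := by
    intro L q hq
    rw [hTdef] at hq
    dsimp only at hq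
    split_ifs at hq with h
    · simp only [Finset.mem_erase, Set.Finite.mem_toFinset, Set.mem_setOf_eq] at hq
      exact ⟨hq.1, hq.2⟩
    · simp at hq
  have hTcard : ∀ L ∈ P, 2 ≤ (T L).card := by
    intro L hL
    have hLA : L ∈ A := (Finset.mem_filter.mp hL).1
    have h3 := hnr L hLA
    have hfin : ({q : Submodule ℂ Vc | IsMultPoint A q ∧ q ≤ L}).Finite := by
      by_contra h
      rw [Set.Infinite.ncard h] at h3; omega
    rw [hTdef]; dsimp only; rw [dif_pos hfin]
    have hc := Set.ncard_eq_toFinset_card _ hfin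
    have := Finset.pred_card_le_card_erase (s := hfin.toFinset) (a := p)
    omega
  -- pairwise disjoint
  have hdisj : ∀ L1 ∈ P, ∀ L2 ∈ P, L1 ≠ L2 → Disjoint (T L1) (T L2) := by
    intro L1 h1 L2 h2 hne
    rw [Finset.disjoint_left]
    intro q hq1 hq2
    obtain ⟨hqp, hqm, hqle1⟩ := hTmem _ _ hq1
    obtain ⟨-, -, hqle2⟩ := hTmem _ _ hq2
    obtain ⟨h1A, h1p⟩ := Finset.mem_filter.mp h1
    obtain ⟨h2A, h2p⟩ := Finset.mem_filter.mp h2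
    exact hne (uniqLine hqm.1 hpp hqp (hA _ h1A) (hA _ h2A) hqle1 h1p hqle2 h2p)
  set SF : Finset (Submodule ℂ Vc) := P.biUnion T with hSFdef
  have hSFcard : 14 ≤ SF.card := by
    rw [hSFdef, Finset.card_biUnion hdisj]
    calc (14 : ℕ) = ∑ _L ∈ P, 2 := by rw [Finset.sum_const, hP]; norm_num
    _ ≤ ∑ L ∈ P, (T L).card := Finset.sum_le_sum hTcard
  -- each q in SF lies on at least 2 lines of Q
  have hkey : ∀ q ∈ SF, ∃ t, t ∈ Q.powersetCard 2 ∧ ∀ M ∈ t, q ≤ M := by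
    intro q hq
    obtain ⟨L, hLP, hqT⟩ := Finset.mem_biUnion.mp hq
    obtain ⟨hqp, hqm, hqle⟩ := hTmem _ _ hqT
    obtain ⟨hLA, hLp⟩ := Finset.mem_filter.mp hLP
    have hsub : A.filter (fun L' => q ≤ L') ⊆ insert L (Q.filter (fun L' => q ≤ L')) := by
      intro L' hL'
      obtain ⟨hL'A, hqL'⟩ := Finset.mem_filter.mp hL'
      by_cases hpL' : p ≤ L'
      · have : L' = L := uniqLine hpp hqm.1 (Ne.symm hqp) (hA _ hL'A) (hA _ hLA) hpL' hqL' hLp hqle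
        exact Finset.mem_insert.mpr (Or.inl this)
      · exact Finset.mem_insert.mpr (Or.inr (by
          rw [hQdef, Finset.mem_filter, Finset.mem_filter]
          exact ⟨⟨hL'A, hpL'⟩, hqL'⟩))
    have h3 : 3 ≤ (A.filter (fun L' => q ≤ L')).card := by rw [← mult_eq]; exact hqm.2
    have hle := Finset.card_le_card hsub
    have hins := Finset.card_insert_le L (Q.filter (fun L' => q ≤ L'))
    have h2 : 2 ≤ (Q.filter (fun L' => q ≤ L')).card := by omega
    obtain ⟨t, hts, htc⟩ := Finset.exists_subset_card_eq h2
    refine ⟨t, Finset.mem_powersetCard.mpr ⟨hts.trans (Finset.filter_subset _ _), htc⟩, ?_⟩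
    intro M hM
    exact (Finset.mem_filter.mp (hts hM)).2
  set f : Submodule ℂ Vc → Finset (Submodule ℂ Vc) := fun q =>
    if h : ∃ t, t ∈ Q.powersetCard 2 ∧ ∀ M ∈ t, q ≤ M then h.choose else ∅ with hfdef
  have hfspec : ∀ q ∈ SF, f q ∈ Q.powersetCard 2 ∧ ∀ M ∈ f q, q ≤ M := by
    intro q hq
    have h := hkey q hq
    rw [hfdef]; simp only [dif_pos h]
    exact h.choose_spec
  have hinj : Set.InjOn f ↑SF := by
    intro q1 hq1 q2 hq2 hfe
    by_contra hne
    obtain ⟨hf1, hc1⟩ := hfspec q1 hq1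
    obtain ⟨hf2, hc2⟩ := hfspec q2 hq2
    obtain ⟨hfQ, hfcard⟩ := Finset.mem_powersetCard.mp hf1
    obtain ⟨M, hM, N, hN, hMN⟩ := Finset.one_lt_card.mp (by omega : 1 < (f q1).card)
    -- q1 and q2 are proj points
    obtain ⟨L1, hL1P, hq1T⟩ := Finset.mem_biUnion.mp hq1
    obtain ⟨L2, hL2P, hq2T⟩ := Finset.mem_biUnion.mp hq2
    have hq1pt := (hTmem _ _ hq1T).2.1.1
    have hq2pt := (hTmem _ _ hq2T).2.1.1
    have hMA : M ∈ A := (Finset.mem_filter.mp (hfQ hM)).1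
    have hNA : N ∈ A := (Finset.mem_filter.mp (hfQ hN)).1
    exact hMN (uniqLine hq1pt hq2pt hne (hA _ hMA) (hA _ hNA)
      (hc1 M hM) (hc2 M (hfe ▸ hM)) (hc1 N hN) (hc2 N (hfe ▸ hN)))
  have hub : SF.card ≤ (Q.powersetCard 2).card := by
    apply Finset.card_le_card_of_injOn f (fun q hq => (hfspec q hq).1) hinj
  rw [Finset.card_powersetCard, hQ] at hub
  have hch : Nat.choose 5 2 = 10 := by decide
  omega
end

section
/- Let A be a nonreductive line arrangement of 12 pairwise distinct lines in ℂP² with at least one point of multiplicity 6 and with n_r(A) = 0 for all r ≥ 7. Then n_6(A) = 1, i.e., A has exactly one point of multiplicity 6. -/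
open Submodule Module

/-- Two distinct projective points lie on at most one common projective line. -/
lemma uniqueLine {p q L M : Submodule ℂ Vc} (hp : IsProjPoint p) (hq : IsProjPoint q)
    (hpq : p ≠ q) (hL : IsProjLine L) (hM : IsProjLine M)
    (hpL : p ≤ L) (hqL : q ≤ L) (hpM : p ≤ M) (hqM : q ≤ M) : L = M := by
  have hsum := Submodule.finrank_sup_add_finrank_inf_eq p q
  rw [hp, hq] at hsum
  have hinfle : finrank ℂ ↥(p ⊓ q) ≤ 1 := by
    have h1 : finrank ℂ ↥p = 1 := hp
    have := Submodule.finrank_mono (inf_le_left : p ⊓ q ≤ p)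
    omega
  have hinf0 : finrank ℂ ↥(p ⊓ q) = 0 := by
    by_contra h
    have h1 : finrank ℂ ↥(p ⊓ q) = 1 := by omega
    have : p ⊓ q = p := Submodule.eq_of_le_of_finrank_eq inf_le_left (by rw [h1, hp])
    have hple : p ≤ q := this ▸ inf_le_right
    exact hpq (Submodule.eq_of_le_of_finrank_eq hple (by rw [hp, hq]))
  have hsup : finrank ℂ ↥(p ⊔ q) = 2 := by omega
  have h1 : p ⊔ q = L :=
    Submodule.eq_of_le_of_finrank_eq (sup_le hpL hqL) (by rw [hsup, hL])
  have h2 : p ⊔ q = M :=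
    Submodule.eq_of_le_of_finrank_eq (sup_le hpM hqM) (by rw [hsup, hM])
  rw [← h1, h2]

/-- Core uniqueness: under the hypotheses, any two sextic points coincide. -/
lemma sextic_eq (A : Finset (Submodule ℂ Vc))
    (hA : LineArrangement A) (hcard : A.card = 12) (hnr : Nonreductive A)
    {p q : Submodule ℂ Vc} (hp : IsProjPoint p) (hq : IsProjPoint q)
    (hmp : mult A p = 6) (hmq : mult A q = 6) : p = q := by
  by_contra hpq
  set Sp : Set (Submodule ℂ Vc) := {L | L ∈ A ∧ p ≤ L} with hSp_def
  set Sq : Set (Submodule ℂ Vc) := {L | L ∈ A ∧ q ≤ L} with hSq_def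
  have hAfin : (↑A : Set (Submodule ℂ Vc)).Finite := A.finite_toSet
  have hSpA : Sp ⊆ ↑A := fun L h => h.1
  have hSqA : Sq ⊆ ↑A := fun L h => h.1
  have hSp_fin : Sp.Finite := hAfin.subset hSpA
  have hSq_fin : Sq.Finite := hAfin.subset hSqA
  have hSp_card : Sp.ncard = 6 := hmp
  have hSq_card : Sq.ncard = 6 := hmq
  -- at most one common line
  have hinter : (Sp ∩ Sq).ncard ≤ 1 := by
    rw [Set.ncard_le_one_iff (hSp_fin.subset Set.inter_subset_left)]
    rintro L L' ⟨⟨hLA, hLp⟩, ⟨_, hLq⟩⟩ ⟨⟨hL'A, hL'p⟩, ⟨_, hL'q⟩⟩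
    exact uniqueLine hp hq hpq (hA L hLA) (hA L' hL'A) hLp hLq hL'p hL'q
  have hie := Set.ncard_union_add_ncard_inter Sp Sq hSp_fin hSq_fin
  rw [hSp_card, hSq_card] at hie
  have hunion : 11 ≤ (Sp ∪ Sq).ncard := by omega
  set R : Set (Submodule ℂ Vc) := ↑A \ (Sp ∪ Sq) with hR_def
  have hRA : R ⊆ ↑A := Set.diff_subset
  have hR_fin : R.Finite := hAfin.subset hRA
  have hR_card : R.ncard ≤ 1 := by
    have hsub : Sp ∪ Sq ⊆ ↑A := Set.union_subset hSpA hSqA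
    have hAcard : (↑A : Set (Submodule ℂ Vc)).ncard = 12 := by
      rw [Set.ncard_coe_finset, hcard]
    have hd : R.ncard = 12 - (Sp ∪ Sq).ncard := by
      rw [hR_def, Set.ncard_diff hsub (hAfin.subset hsub), hAcard]
    omega
  have hR_ss : R.Subsingleton := fun x hx y hy => (Set.ncard_le_one_iff hR_fin).mp hR_card hx hy
  -- choose a line M through p but not q
  have hMex : ∃ M, M ∈ Sp ∧ M ∉ Sq := by
    by_contra h
    push_neg at h
    have hsub : Sp ⊆ Sp ∩ Sq := fun L hL => ⟨hL, h L hL⟩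
    have := Set.ncard_le_ncard hsub (hSp_fin.subset Set.inter_subset_left)
    omega
  obtain ⟨M, hMp, hMq⟩ := hMex
  obtain ⟨hMA, hpM⟩ := hMp
  have hqM : ¬ q ≤ M := fun h => hMq ⟨hMA, h⟩
  have hT3 := hnr M hMA
  -- key claim: any multiple point on M is p or lies on some line of R
  have key : ∀ x : Submodule ℂ Vc, IsMultPoint A x ∧ x ≤ M →
      x = p ∨ ∃ E ∈ R, x ≤ E := by
    rintro x ⟨⟨hxpt, hx3⟩, hxM⟩
    by_cases hxp : x = p
    · exact Or.inl hxp
    right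
    have hxq : x ≠ q := fun h => hqM (h ▸ hxM)
    by_contra hnoE
    push_neg at hnoE
    set Sx : Set (Submodule ℂ Vc) := {L | L ∈ A ∧ x ≤ L} with hSx_def
    have hSx_card : 3 ≤ Sx.ncard := hx3
    have hsplit : Sx ⊆ (Sx ∩ Sp) ∪ (Sx ∩ Sq) := by
      intro L hL
      by_cases hmem : L ∈ Sp ∪ Sq
      · rcases hmem with h | h
        · exact Or.inl ⟨hL, h⟩
        · exact Or.inr ⟨hL, h⟩
      · exact absurd hL.2 (hnoE L ⟨hL.1, hmem⟩)
    have h1 : (Sx ∩ Sp).ncard ≤ 1 := by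
      rw [Set.ncard_le_one_iff (hSp_fin.subset Set.inter_subset_right)]
      rintro L L' ⟨⟨hLA, hLx⟩, ⟨_, hLp⟩⟩ ⟨⟨hL'A, hL'x⟩, ⟨_, hL'p⟩⟩
      exact uniqueLine hxpt hp hxp (hA L hLA) (hA L' hL'A) hLx hLp hL'x hL'p
    have h2 : (Sx ∩ Sq).ncard ≤ 1 := by
      rw [Set.ncard_le_one_iff (hSq_fin.subset Set.inter_subset_right)]
      rintro L L' ⟨⟨hLA, hLx⟩, ⟨_, hLq⟩⟩ ⟨⟨hL'A, hL'x⟩, ⟨_, hL'q⟩⟩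
      exact uniqueLine hxpt hq hxq (hA L hLA) (hA L' hL'A) hLx hLq hL'x hL'q
    have hle : Sx.ncard ≤ (Sx ∩ Sp).ncard + (Sx ∩ Sq).ncard := by
      calc Sx.ncard ≤ ((Sx ∩ Sp) ∪ (Sx ∩ Sq)).ncard :=
            Set.ncard_le_ncard hsplit
              ((hSp_fin.subset Set.inter_subset_right).union
                (hSq_fin.subset Set.inter_subset_right))
        _ ≤ (Sx ∩ Sp).ncard + (Sx ∩ Sq).ncard := Set.ncard_union_le _ _
    omega
  rcases hR_ss.eq_empty_or_singleton with hRe | ⟨E0, hRE⟩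
  · have hsub : {x : Submodule ℂ Vc | IsMultPoint A x ∧ x ≤ M} ⊆ {p} := by
      intro x hx
      rcases key x hx with h | ⟨E, hE, _⟩
      · exact h
      · rw [hRe] at hE; exact absurd hE (Set.notMem_empty E)
    have := Set.ncard_le_ncard hsub (Set.finite_singleton p)
    rw [Set.ncard_singleton] at this
    omega
  · have hE0R : E0 ∈ R := hRE ▸ rfl
    have hE0A : E0 ∈ A := hRA hE0R
    have hME0 : M ≠ E0 := by
      intro h
      exact (hRE ▸ hE0R : E0 ∈ R).2 (Or.inl (h ▸ ⟨hMA, hpM⟩))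
    set TE : Set (Submodule ℂ Vc) := {x | IsProjPoint x ∧ x ≤ M ∧ x ≤ E0} with hTE_def
    have hTE_ss : TE.Subsingleton := by
      rintro x ⟨hxpt, hxM, hxE⟩ y ⟨hypt, hyM, hyE⟩
      by_contra hxy
      exact hME0 (uniqueLine hxpt hypt hxy (hA M hMA) (hA E0 hE0A) hxM hyM hxE hyE)
    have hsub : {x : Submodule ℂ Vc | IsMultPoint A x ∧ x ≤ M} ⊆ {p} ∪ TE := by
      rintro x hx
      rcases key x hx with h | ⟨E, hE, hxE⟩
      · exact Or.inl h
      · have : E = E0 := by rw [hRE] at hE; exact hE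
        exact Or.inr ⟨hx.1.1, hx.2, this ▸ hxE⟩
    have hfin : ({p} ∪ TE : Set (Submodule ℂ Vc)).Finite :=
      (Set.finite_singleton p).union hTE_ss.finite
    have hle1 := Set.ncard_le_ncard hsub hfin
    have hle2 := Set.ncard_union_le ({p} : Set (Submodule ℂ Vc)) TE
    have hTE1 : TE.ncard ≤ 1 := (Set.ncard_le_one_iff hTE_ss.finite).mpr
      (fun ha hb => hTE_ss ha hb)
    rw [Set.ncard_singleton] at hle2
    omega

/-- A nonreductive arrangement of 12 lines with a sextic point and no point of multiplicity
at least 7 has exactly one sextic point. -/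
theorem nonreductive_sextic_unique (A : Finset (Submodule ℂ Vc))
    (hA : LineArrangement A) (hcard : A.card = 12) (hnr : Nonreductive A)
    (h6 : 1 ≤ nPts A 6) (h7 : ∀ r, 7 ≤ r → nPts A r = 0) :
    nPts A 6 = 1 := by
  have hne : {p : Submodule ℂ Vc | IsProjPoint p ∧ mult A p = 6}.Nonempty :=
    Set.nonempty_of_ncard_ne_zero (by intro h; rw [nPts] at h6; omega)
  obtain ⟨p0, hp0⟩ := hne
  have heq : {p : Submodule ℂ Vc | IsProjPoint p ∧ mult A p = 6} = {p0} := by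
    ext q0
    constructor
    · intro hq0
      exact sextic_eq A hA hcard hnr hq0.1 hp0.1 hq0.2 hp0.2
    · rintro rfl; exact hp0
  rw [nPts, heq, Set.ncard_singleton]
end

section
/- Let A be a nonreductive line arrangement of 12 pairwise distinct lines in ℂP² with at least one point of multiplicity 6 and with n_r(A) = 0 for all r ≥ 7. Then n_4(A) ≤ 1, i.e., A has at most one point of multiplicity 4. -/
open Submodule Module

section AuxProof

open Classical

/-- Two distinct projective lines meet in at most one projective point. -/
lemma aux_unique_common_point {L L' x y : Submodule ℂ Vc}
    (hL : IsProjLine L) (hL' : IsProjLine L') (hne : L ≠ L')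
    (hx : IsProjPoint x) (hy : IsProjPoint y)
    (hxL : x ≤ L) (hxL' : x ≤ L') (hyL : y ≤ L) (hyL' : y ≤ L') : x = y := by
  have hinf : Module.finrank ℂ (L ⊓ L' : Submodule ℂ Vc) ≤ 1 := by
    by_contra hcon
    push_neg at hcon
    have h1 : L ⊓ L' = L := by
      refine Submodule.eq_of_le_of_finrank_le inf_le_left ?_
      rw [hL]; omega
    have h2 : L ⊓ L' = L' := by
      refine Submodule.eq_of_le_of_finrank_le inf_le_right ?_
      rw [hL']; omega
    exact hne (h1 ▸ h2)
  have hxi : x = L ⊓ L' := by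
    refine Submodule.eq_of_le_of_finrank_le (le_inf hxL hxL') ?_
    rw [hx]; exact hinf
  have hyi : y = L ⊓ L' := by
    refine Submodule.eq_of_le_of_finrank_le (le_inf hyL hyL') ?_
    rw [hy]; exact hinf
  rw [hxi, hyi]

/-- Two distinct projective points lie on at most one common projective line. -/
lemma aux_unique_common_line {L L' x y : Submodule ℂ Vc}
    (hL : IsProjLine L) (hL' : IsProjLine L')
    (hx : IsProjPoint x) (hy : IsProjPoint y) (hxy : x ≠ y)
    (hxL : x ≤ L) (hxL' : x ≤ L') (hyL : y ≤ L) (hyL' : y ≤ L') : L = L' := by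
  by_contra hne
  exact hxy (aux_unique_common_point hL hL' hne hx hy hxL hxL' hyL hyL')

/-- Multiplicity as a `Finset.card`. -/
lemma aux_mult_eq_card (A : Finset (Submodule ℂ Vc)) (x : Submodule ℂ Vc) :
    mult A x = (A.filter (fun L => x ≤ L)).card := by
  have : {L : Submodule ℂ Vc | L ∈ A ∧ x ≤ L} = ↑(A.filter (fun L => x ≤ L)) := by
    ext L; simp
  rw [mult, this, Set.ncard_coe_finset]

end AuxProof

/-- A nonreductive arrangement of 12 lines with a sextic point and no point of multiplicity
at least 7 has at most one quadruple point. -/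
theorem nonreductive_sextic_at_most_one_quadruple (A : Finset (Submodule ℂ Vc))
    (hA : LineArrangement A) (hcard : A.card = 12) (hnr : Nonreductive A)
    (h6 : 1 ≤ nPts A 6) (h7 : ∀ r, 7 ≤ r → nPts A r = 0) :
    nPts A 4 ≤ 1 := by
  classical
  by_contra hcon
  push_neg at hcon
  -- extract the sextic point p
  have hp' : ({x : Submodule ℂ Vc | IsProjPoint x ∧ mult A x = 6}).Nonempty := by
    apply Set.nonempty_of_ncard_ne_zero
    unfold nPts at h6; omega
  obtain ⟨p, hpP, hpm6⟩ := hp'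
  -- extract two distinct quadruple points
  have hfin4 : ({x : Submodule ℂ Vc | IsProjPoint x ∧ mult A x = 4}).Finite := by
    apply Set.finite_of_ncard_ne_zero
    unfold nPts at hcon; omega
  have h2le : 1 < ({x : Submodule ℂ Vc | IsProjPoint x ∧ mult A x = 4}).ncard := hcon
  obtain ⟨q1, q2, hq1, hq2, hq12⟩ := (Set.one_lt_ncard_iff hfin4).mp h2le
  simp only [Set.mem_setOf_eq] at hq1 hq2
  have hq1p : q1 ≠ p := by intro h; rw [h, hpm6] at hq1; omega
  have hq2p : q2 ≠ p := by intro h; rw [h, hpm6] at hq2; omega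
  -- the lines through p and the lines not through p
  set Pset := A.filter (fun L => p ≤ L) with hPset
  set Mset := A.filter (fun L => ¬ p ≤ L) with hMset
  have hPcard : Pset.card = 6 := by rw [hPset, ← aux_mult_eq_card]; exact hpm6
  have hMcard : Mset.card = 6 := by
    have := Finset.card_filter_add_card_filter_not
      (s := A) (p := fun L => p ≤ L)
    rw [hcard, ← hPset, ← hMset] at this
    omega
  -- lines of Mset through a point, and counting function
  set Mq : Submodule ℂ Vc → Finset (Submodule ℂ Vc) :=
    fun x => Mset.filter (fun L => x ≤ L) with hMq
  set f : Submodule ℂ Vc → ℕ := fun x => ((Mq x).offDiag).card with hf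
  -- a point ≠ p has at least (mult - 1) lines of Mset through it
  have hMq_lb : ∀ x : Submodule ℂ Vc, IsProjPoint x → x ≠ p →
      mult A x - 1 ≤ (Mq x).card := by
    intro x hx hxp
    have hsplit := Finset.card_filter_add_card_filter_not
      (s := A.filter (fun L => x ≤ L)) (p := fun L => p ≤ L)
    have h1 : ((A.filter (fun L => x ≤ L)).filter (fun L => p ≤ L)).card ≤ 1 := by
      apply Finset.card_le_one.mpr
      intro a ha b hb
      simp only [Finset.mem_filter] at ha hb
      exact aux_unique_common_line (hA a ha.1.1) (hA b hb.1.1) hx hpP hxp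
        ha.1.2 hb.1.2 ha.2 hb.2
    have h2 : ((A.filter (fun L => x ≤ L)).filter (fun L => ¬ p ≤ L)) ⊆ Mq x := by
      intro L hL
      simp only [Finset.mem_filter, hMq, hMset] at hL ⊢
      tauto
    have h3 := Finset.card_le_card h2
    have h4 := aux_mult_eq_card A x
    omega
  -- lower bounds on f
  have hf2 : ∀ x : Submodule ℂ Vc, IsProjPoint x → x ≠ p → 3 ≤ mult A x →
      2 ≤ f x := by
    intro x hx hxp hm
    have hk := hMq_lb x hx hxp
    have hfx : f x = (Mq x).card * (Mq x).card - (Mq x).card :=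
      Finset.offDiag_card _
    have hk2 : 2 ≤ (Mq x).card := by omega
    have := Nat.mul_le_mul_right (Mq x).card hk2
    omega
  have hf6 : ∀ x : Submodule ℂ Vc, IsProjPoint x → x ≠ p → 4 ≤ mult A x →
      6 ≤ f x := by
    intro x hx hxp hm
    have hk := hMq_lb x hx hxp
    have hfx : f x = (Mq x).card * (Mq x).card - (Mq x).card :=
      Finset.offDiag_card _
    have hk3 : 3 ≤ (Mq x).card := by omega
    have := Nat.mul_le_mul_right (Mq x).card hk3
    omega
  -- for each line through p, at least two multiple points other than p lie on it
  set g : Submodule ℂ Vc → Finset (Submodule ℂ Vc) := fun L =>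
    if h : ({x : Submodule ℂ Vc | IsMultPoint A x ∧ x ≤ L}).Finite then
      h.toFinset.erase p else ∅ with hg
  have hg_mem : ∀ L x, x ∈ g L → IsMultPoint A x ∧ x ≤ L ∧ x ≠ p := by
    intro L x hx
    simp only [hg] at hx
    by_cases h : ({x : Submodule ℂ Vc | IsMultPoint A x ∧ x ≤ L}).Finite
    · rw [dif_pos h] at hx
      rw [Finset.mem_erase, Set.Finite.mem_toFinset] at hx
      exact ⟨hx.2.1, hx.2.2, hx.1⟩
    · rw [dif_neg h] at hx
      simp at hx
  have hg_card : ∀ L ∈ Pset, 2 ≤ (g L).card := by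
    intro L hLP
    rw [hPset, Finset.mem_filter] at hLP
    have hnc := hnr L hLP.1
    have hfin : ({x : Submodule ℂ Vc | IsMultPoint A x ∧ x ≤ L}).Finite :=
      Set.finite_of_ncard_ne_zero (by omega)
    have hcardt : ({x : Submodule ℂ Vc | IsMultPoint A x ∧ x ≤ L}).ncard
        = hfin.toFinset.card := Set.ncard_eq_toFinset_card _ hfin
    have hpmem : p ∈ hfin.toFinset := by
      rw [Set.Finite.mem_toFinset]
      exact ⟨⟨hpP, by omega⟩, hLP.2⟩
    simp only [hg]
    rw [dif_pos hfin]
    have := Finset.card_erase_of_mem hpmem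
    omega
  set T0 := Pset.biUnion g with hT0
  have hT0disj : ∀ L ∈ Pset, ∀ L' ∈ Pset, L ≠ L' → Disjoint (g L) (g L') := by
    intro L hL L' hL' hne
    rw [Finset.disjoint_left]
    intro x hx hx'
    obtain ⟨hxm, hxL, hxp⟩ := hg_mem L x hx
    obtain ⟨_, hxL', _⟩ := hg_mem L' x hx'
    rw [hPset, Finset.mem_filter] at hL hL'
    exact hne (aux_unique_common_line (hA L hL.1) (hA L' hL'.1) hxm.1 hpP hxp
      hxL hxL' hL.2 hL'.2)
  have hT0card : 12 ≤ T0.card := by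
    rw [hT0, Finset.card_biUnion hT0disj]
    have := Finset.card_nsmul_le_sum Pset (fun L => (g L).card) 2 hg_card
    rw [hPcard] at this
    simpa using this
  have hT0_mem : ∀ x ∈ T0, IsMultPoint A x ∧ x ≠ p := by
    intro x hx
    rw [hT0, Finset.mem_biUnion] at hx
    obtain ⟨L, _, hxL⟩ := hx
    obtain ⟨h1, _, h3⟩ := hg_mem L x hxL
    exact ⟨h1, h3⟩
  -- amalgamated set of points
  set T0' := (T0.erase q1).erase q2 with hT0'
  have hT0'card : 10 ≤ T0'.card := by
    have h1 := Finset.pred_card_le_card_erase (s := T0) (a := q1)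
    have h2 := Finset.pred_card_le_card_erase (s := T0.erase q1) (a := q2)
    rw [hT0']
    omega
  have hq2nin : q2 ∉ T0' := Finset.notMem_erase _ _
  have hq1nin : q1 ∉ insert q2 T0' := by
    intro h
    rcases Finset.mem_insert.mp h with h | h
    · exact hq12 h
    · exact Finset.notMem_erase _ _ (Finset.mem_of_mem_erase h)
  set T := insert q1 (insert q2 T0') with hT
  have hT_pt : ∀ x ∈ T, IsProjPoint x := by
    intro x hx
    rw [hT] at hx
    rcases Finset.mem_insert.mp hx with h | h
    · rw [h]; exact hq1.1
    rcases Finset.mem_insert.mp h with h | h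
    · rw [h]; exact hq2.1
    · exact (hT0_mem x (Finset.mem_of_mem_erase (Finset.mem_of_mem_erase h))).1.1
  -- upper bound: the pair-sets of distinct points are disjoint
  have hdisjT : ∀ x ∈ T, ∀ y ∈ T, x ≠ y →
      Disjoint ((Mq x).offDiag) ((Mq y).offDiag) := by
    intro x hx y hy hxy
    rw [Finset.disjoint_left]
    rintro ⟨a, b⟩ hab hab'
    rw [Finset.mem_offDiag] at hab hab'
    obtain ⟨ha, hb, hne⟩ := hab
    obtain ⟨ha', hb', _⟩ := hab'
    simp only [hMq, hMset, Finset.mem_filter] at ha hb ha' hb'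
    exact hxy (aux_unique_common_point (hA a ha.1.1) (hA b hb.1.1) hne
      (hT_pt x hx) (hT_pt y hy) ha.2 hb.2 ha'.2 hb'.2)
  have hsum_le : ∑ x ∈ T, f x ≤ 30 := by
    have hbu : (T.biUnion fun x => (Mq x).offDiag).card = ∑ x ∈ T, f x :=
      Finset.card_biUnion hdisjT
    have hsub : (T.biUnion fun x => (Mq x).offDiag) ⊆ Mset.offDiag := by
      intro z hz
      obtain ⟨x, _, hzx⟩ := Finset.mem_biUnion.mp hz
      rw [Finset.mem_offDiag] at hzx ⊢
      simp only [hMq, Finset.mem_filter] at hzx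
      exact ⟨hzx.1.1, hzx.2.1.1, hzx.2.2⟩
    have hle := Finset.card_le_card hsub
    have hoff : Mset.offDiag.card = 30 := by
      rw [Finset.offDiag_card, hMcard]
    omega
  -- lower bound
  have hsum_ge : 32 ≤ ∑ x ∈ T, f x := by
    rw [hT, Finset.sum_insert hq1nin, Finset.sum_insert hq2nin]
    have h1 : 6 ≤ f q1 := hf6 q1 hq1.1 hq1p (by omega)
    have h2 : 6 ≤ f q2 := hf6 q2 hq2.1 hq2p (by omega)
    have h3 : ∀ x ∈ T0', 2 ≤ f x := by
      intro x hx
      have hx0 := hT0_mem x (Finset.mem_of_mem_erase (Finset.mem_of_mem_erase hx))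
      exact hf2 x hx0.1.1 hx0.2 hx0.1.2
    have h4 := Finset.card_nsmul_le_sum T0' f 2 h3
    rw [smul_eq_mul] at h4
    have h6 : T0'.sum f = ∑ x ∈ T0', f x := rfl
    omega
  omega
end

section
/- There is no nonreductive line arrangement A of 12 pairwise distinct lines in ℂP² with n_6(A) = 1, n_4(A) = 1, n_r(A) = 0 for all r ≥ 7, whose point p of multiplicity 6 and point q of multiplicity 4 are not collinear in A, i.e., no line of A contains both p and q. -/
open Submodule Module

private lemma finrank_inf_le_one {L L' : Submodule ℂ Vc} (hL : IsProjLine L)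
    (hL' : IsProjLine L') (h : L ≠ L') : Module.finrank ℂ ↥(L ⊓ L') ≤ 1 := by
  have hL2 : Module.finrank ℂ ↥L = 2 := hL
  have hL'2 : Module.finrank ℂ ↥L' = 2 := hL'
  by_contra hc
  push_neg at hc
  have h1 : L ⊓ L' = L :=
    Submodule.eq_of_le_of_finrank_le inf_le_left (by omega)
  have h2 : L ⊓ L' = L' :=
    Submodule.eq_of_le_of_finrank_le inf_le_right (by omega)
  exact h (h1.symm.trans h2)

private lemma point_unique {x y W : Submodule ℂ Vc} (hx : IsProjPoint x) (hy : IsProjPoint y)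
    (hW : Module.finrank ℂ ↥W ≤ 1) (hxW : x ≤ W) (hyW : y ≤ W) : x = y := by
  have hx1 : Module.finrank ℂ ↥x = 1 := hx
  have hy1 : Module.finrank ℂ ↥y = 1 := hy
  have h1 : x = W := Submodule.eq_of_le_of_finrank_le hxW (by omega)
  have h2 : y = W := Submodule.eq_of_le_of_finrank_le hyW (by omega)
  exact h1.trans h2.symm

/-- There is no nonreductive arrangement of 12 lines with `n₆ = n₄ = 1`, `n_r = 0` for
`r ≥ 7`, whose sextic point and quadruple point are not collinear in the arrangement. -/
theorem no_noncollinear_sextic_quadruple :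
    ¬ ∃ (A : Finset (Submodule ℂ Vc)) (p q : Submodule ℂ Vc),
      LineArrangement A ∧ A.card = 12 ∧ Nonreductive A ∧
      nPts A 6 = 1 ∧ nPts A 4 = 1 ∧ (∀ r, 7 ≤ r → nPts A r = 0) ∧
      IsProjPoint p ∧ mult A p = 6 ∧ IsProjPoint q ∧ mult A q = 4 ∧
      (∀ L ∈ A, ¬ (p ≤ L ∧ q ≤ L)) := by
  
  classical
  rintro ⟨A, p, q, hArr, hcard, hNR, -, -, -, hp, hmp, hq, hmq, hnc⟩
  have multEq : ∀ x : Submodule ℂ Vc, mult A x = (A.filter fun L => x ≤ L).card := by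
    intro x
    unfold mult
    rw [show {L : Submodule ℂ Vc | L ∈ A ∧ x ≤ L} = ↑(A.filter fun L => x ≤ L) by
      ext L; simp [Finset.mem_filter]]
    exact Set.ncard_coe_finset _
  set P := A.filter (fun L => p ≤ L) with hPdef
  set Qs := A.filter (fun L => q ≤ L) with hQdef
  have hPcard : P.card = 6 := (multEq p).symm.trans hmp
  have hQcard : Qs.card = 4 := (multEq q).symm.trans hmq
  have hPQdisj : Disjoint P Qs := by
    rw [Finset.disjoint_left]
    intro L hLP hLQ
    obtain ⟨hLA, hpL⟩ := Finset.mem_filter.1 hLP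
    obtain ⟨-, hqL⟩ := Finset.mem_filter.1 hLQ
    exact hnc L hLA ⟨hpL, hqL⟩
  have hPQsub : P ∪ Qs ⊆ A := by
    intro L hL
    rcases Finset.mem_union.1 hL with h | h <;> exact (Finset.mem_filter.1 h).1
  have hRcard : (A \ (P ∪ Qs)).card = 2 := by
    rw [Finset.card_sdiff_of_subset hPQsub, Finset.card_union_of_disjoint hPQdisj, hPcard, hQcard, hcard]
  obtain ⟨F1, F2, hF12, hR⟩ := Finset.card_eq_two.1 hRcard
  have hFmem : ∀ F ∈ ({F1, F2} : Finset (Submodule ℂ Vc)), F ∈ A ∧ ¬ p ≤ F ∧ ¬ q ≤ F := by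
    intro F hF
    rw [← hR] at hF
    obtain ⟨hFA, hFn⟩ := Finset.mem_sdiff.1 hF
    rw [Finset.mem_union] at hFn
    push_neg at hFn
    exact ⟨hFA, fun h => hFn.1 (Finset.mem_filter.2 ⟨hFA, h⟩),
      fun h => hFn.2 (Finset.mem_filter.2 ⟨hFA, h⟩)⟩
  obtain ⟨hF1A, hF1p, hF1q⟩ := hFmem F1 (by simp)
  obtain ⟨hF2A, hF2p, hF2q⟩ := hFmem F2 (by simp)
  have hdecomp : ∀ M ∈ A, M ∈ P ∨ M ∈ Qs ∨ M = F1 ∨ M = F2 := by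
    intro M hM
    by_cases h1 : M ∈ P
    · exact Or.inl h1
    by_cases h2 : M ∈ Qs
    · exact Or.inr (Or.inl h2)
    have hMR : M ∈ A \ (P ∪ Qs) := Finset.mem_sdiff.2 ⟨hM, by rw [Finset.mem_union]; tauto⟩
    rw [hR, Finset.mem_insert, Finset.mem_singleton] at hMR
    tauto
  have key : ∀ M ∈ A, ∀ M' ∈ A, M ≠ M' → ∀ x y : Submodule ℂ Vc,
      IsProjPoint x → IsProjPoint y → x ≤ M → x ≤ M' → y ≤ M → y ≤ M' → x = y := by
    intro M hM M' hM' hne x y hx hy hxM hxM' hyM hyM'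
    exact point_unique hx hy (finrank_inf_le_one (hArr M hM) (hArr M' hM') hne)
      (le_inf hxM hxM') (le_inf hyM hyM')
  have hclaim : ∀ L : Submodule ℂ Vc, ∃ y M : Submodule ℂ Vc, L ∈ P →
      IsProjPoint y ∧ y ≤ L ∧ y ≤ F1 ∧ y ≠ p ∧ M ∈ Qs ∧ y ≤ M := by
    intro L
    by_cases hLP : L ∈ P
    swap
    · exact ⟨⊥, ⊥, fun h => absurd h hLP⟩
    suffices hsuf : ∃ y M : Submodule ℂ Vc,
        IsProjPoint y ∧ y ≤ L ∧ y ≤ F1 ∧ y ≠ p ∧ M ∈ Qs ∧ y ≤ M by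
      obtain ⟨y, M, hy⟩ := hsuf
      exact ⟨y, M, fun _ => hy⟩
    obtain ⟨hLA, hpL⟩ := Finset.mem_filter.1 hLP
    have hqL : ¬ q ≤ L := fun h => hnc L hLA ⟨hpL, h⟩
    have hLF1 : L ≠ F1 := fun h => hF1p (h ▸ hpL)
    have hLF2 : L ≠ F2 := fun h => hF2p (h ▸ hpL)
    -- a multiple point x ≠ p on L lies on F1 or F2
    have hfree : ∀ x : Submodule ℂ Vc, IsMultPoint A x → x ≤ L → x ≠ p →
        x ≤ F1 ∨ x ≤ F2 := by
      intro x ⟨hxpt, hxm⟩ hxL hxp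
      rw [multEq] at hxm
      by_contra hcon
      push_neg at hcon
      have hxq : x ≠ q := fun h => hqL (h ▸ hxL)
      have hsub1 : ∀ M ∈ A.filter (fun M => x ≤ M), M ∈ Qs ∨ M = L := by
        intro M hM
        obtain ⟨hMA, hxM⟩ := Finset.mem_filter.1 hM
        rcases hdecomp M hMA with hMP | hMQ | rfl | rfl
        · obtain ⟨-, hpM⟩ := Finset.mem_filter.1 hMP
          right
          by_contra hML
          exact hxp (key M hMA L hLA hML x p hxpt hp hxM hxL hpM hpL)
        · exact Or.inl hMQ
        · exact absurd hxM hcon.1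
        · exact absurd hxM hcon.2
      rcases Finset.eq_empty_or_nonempty ((A.filter (fun M => x ≤ M)) ∩ Qs) with he | ⟨m, hm⟩
      · have : A.filter (fun M => x ≤ M) ⊆ {L} := by
          intro M hM
          rcases hsub1 M hM with hMQ | rfl
          · exact absurd (Finset.mem_inter.2 ⟨hM, hMQ⟩) (by simp [he])
          · simp
        have := Finset.card_le_card this
        simp at this
        omega
      · obtain ⟨hmT, hmQ⟩ := Finset.mem_inter.1 hm
        obtain ⟨hmA, hxm'⟩ := Finset.mem_filter.1 hmT
        obtain ⟨-, hqm⟩ := Finset.mem_filter.1 hmQ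
        have : A.filter (fun M => x ≤ M) ⊆ {L, m} := by
          intro M hM
          rcases hsub1 M hM with hMQ | rfl
          · obtain ⟨hMA, hxM⟩ := Finset.mem_filter.1 hM
            obtain ⟨-, hqM⟩ := Finset.mem_filter.1 hMQ
            have : M = m := by
              by_contra hMm
              exact hxq (key M hMA m hmA hMm x q hxpt hq hxM hxm' hqM hqm)
            simp [this]
          · simp
        have h1 := Finset.card_le_card this
        have h2 : ({L, m} : Finset (Submodule ℂ Vc)).card ≤ 2 :=
          le_trans (Finset.card_insert_le _ _) (by simp)
        omega
    -- two distinct multiple points on L different from p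
    have hS := hNR L hLA
    set S := {x : Submodule ℂ Vc | IsMultPoint A x ∧ x ≤ L} with hSdef
    have hSfin : S.Finite := by
      by_contra h
      rw [Set.Infinite.ncard h] at hS
      omega
    have hS2 : 1 < (S \ {p}).ncard := by
      have hsub : S ⊆ (S \ {p}) ∪ {p} := by
        intro x hx
        by_cases hxp : x = p <;> simp [hxp, hx]
      have h1 := Set.ncard_le_ncard hsub (hSfin.diff.union (Set.finite_singleton _))
      have h2 := Set.ncard_union_le (S \ ({p} : Set (Submodule ℂ Vc))) {p}
      have h3 : ({p} : Set (Submodule ℂ Vc)).ncard = 1 := Set.ncard_singleton p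
      omega
    obtain ⟨x, x', hx, hx', hxx'⟩ := (Set.one_lt_ncard_iff hSfin.diff).1 hS2
    obtain ⟨⟨hxmult, hxL⟩, hxp⟩ : (IsMultPoint A x ∧ x ≤ L) ∧ x ≠ p := by
      obtain ⟨h1, h2⟩ := hx
      exact ⟨h1, by simpa using h2⟩
    obtain ⟨⟨hx'mult, hx'L⟩, hx'p⟩ : (IsMultPoint A x' ∧ x' ≤ L) ∧ x' ≠ p := by
      obtain ⟨h1, h2⟩ := hx'
      exact ⟨h1, by simpa using h2⟩
    have hnot2 : ∀ F ∈ A, F ≠ L → ¬ (x ≤ F ∧ x' ≤ F) := by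
      rintro F hFA hFL ⟨h1, h2⟩
      exact hxx' (key F hFA L hLA hFL x x' hxmult.1 hx'mult.1 h1 hxL h2 hx'L)
    -- pick the point on F1
    obtain ⟨y, hym, hyL, hyp, hyF1, hynF2⟩ :
        ∃ y, IsMultPoint A y ∧ y ≤ L ∧ y ≠ p ∧ y ≤ F1 ∧ ¬ y ≤ F2 := by
      rcases hfree x hxmult hxL hxp with h1 | h1 <;>
        rcases hfree x' hx'mult hx'L hx'p with h2 | h2
      · exact absurd ⟨h1, h2⟩ (hnot2 F1 hF1A (Ne.symm hLF1))
      · exact ⟨x, hxmult, hxL, hxp, h1, fun h => hnot2 F2 hF2A (Ne.symm hLF2) ⟨h, h2⟩⟩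
      · exact ⟨x', hx'mult, hx'L, hx'p, h2, fun h => hnot2 F2 hF2A (Ne.symm hLF2) ⟨h1, h⟩⟩
      · exact absurd ⟨h1, h2⟩ (hnot2 F2 hF2A (Ne.symm hLF2))
    obtain ⟨hypt, hycard⟩ := hym
    rw [multEq] at hycard
    have hyq : y ≠ q := fun h => hqL (h ▸ hyL)
    -- find a q-line through y
    by_contra hcon
    push_neg at hcon
    have hsub : A.filter (fun M => y ≤ M) ⊆ {L, F1} := by
      intro M hM
      obtain ⟨hMA, hyM⟩ := Finset.mem_filter.1 hM
      rcases hdecomp M hMA with hMP | hMQ | rfl | rfl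
      · obtain ⟨-, hpM⟩ := Finset.mem_filter.1 hMP
        have : M = L := by
          by_contra hML
          exact hyp (key M hMA L hLA hML y p hypt hp hyM hyL hpM hpL)
        simp [this]
      · exact absurd hyM (hcon y M hypt hyL hyF1 hyp hMQ)
      · simp
      · exact absurd hyM hynF2
    have h1 := Finset.card_le_card hsub
    have h2 : ({L, F1} : Finset (Submodule ℂ Vc)).card ≤ 2 :=
      le_trans (Finset.card_insert_le _ _) (by simp)
    omega
  choose Y Mf hYM using hclaim
  have hmaps : ∀ L ∈ P, Mf L ∈ Qs := fun L hL => ((hYM L) hL).2.2.2.2.1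
  have hlt : Qs.card < P.card := by omega
  obtain ⟨L, hL, L', hL', hLL', hMfeq⟩ :=
    Finset.exists_ne_map_eq_of_card_lt_of_maps_to hlt hmaps
  obtain ⟨hY, hYL, hYF1, hYp, hMQ, hYM1⟩ := (hYM L) hL
  obtain ⟨hY', hYL', hYF1', hYp', hMQ', hYM1'⟩ := (hYM L') hL'
  obtain ⟨hLA, hpL⟩ := Finset.mem_filter.1 hL
  obtain ⟨hL'A, hpL'⟩ := Finset.mem_filter.1 hL'
  have hyy : Y L ≠ Y L' := by
    intro h
    exact hYp (key L hLA L' hL'A hLL' (Y L) p hY hp hYL (h ▸ hYL') hpL hpL')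
  obtain ⟨hMA, hqM⟩ := Finset.mem_filter.1 hMQ
  have hMF1 : Mf L ≠ F1 := fun h => hF1q (h ▸ hqM)
  exact hyy (key (Mf L) hMA F1 hF1A hMF1 (Y L) (Y L') hY hY' hYM1 hYF1
    (hMfeq ▸ hYM1') hYF1')
end

section
/- Let A be a line arrangement of 12 pairwise distinct lines in ℂP² having a point p of multiplicity 6 lying on the lines L_1, …, L_6 of A, and suppose that every multiple point of A lies on L_1 ∪ L_2 ∪ L_3 ∪ L_4 ∪ L_5 ∪ L_6. Then every line of A that does not pass through p contains at most 5 multiple points of A. -/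
open Submodule Module

lemma proj_point_eq {q r : Submodule ℂ Vc} (hq : IsProjPoint q)
    (hr : Module.finrank ℂ r = 1) (h : q ≤ r) : q = r :=
  Submodule.eq_of_le_of_finrank_eq h (hq.trans hr.symm)

lemma inf_line_rank {L M : Submodule ℂ Vc} (hL : IsProjLine L) (hM : IsProjLine M)
    (hne : L ≠ M) : Module.finrank ℂ ↥(L ⊓ M) = 1 := by
  have h1 : Module.finrank ℂ ↥(L ⊔ M) + Module.finrank ℂ ↥(L ⊓ M) = 4 := by
    rw [Submodule.finrank_sup_add_finrank_inf_eq, hL, hM]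
  have h2 : Module.finrank ℂ ↥(L ⊔ M) ≤ 3 := by
    have := Submodule.finrank_le (L ⊔ M)
    rwa [finrank_Vc] at this
  have h3 : L < L ⊔ M := by
    refine lt_of_le_of_ne le_sup_left (fun h => hne ?_)
    have hMle : M ≤ L := h ▸ le_sup_right
    exact (Submodule.eq_of_le_of_finrank_eq hMle (hM.trans hL.symm)).symm
  have h4 := Submodule.finrank_lt_finrank_of_lt h3
  rw [hL] at h4
  omega

lemma unique_point {q q' N M : Submodule ℂ Vc} (hq : IsProjPoint q) (hq' : IsProjPoint q')
    (hN : IsProjLine N) (hM : IsProjLine M) (hne : N ≠ M)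
    (h1 : q ≤ N) (h2 : q ≤ M) (h3 : q' ≤ N) (h4 : q' ≤ M) : q = q' := by
  have hr := inf_line_rank hN hM hne
  exact (proj_point_eq hq hr (le_inf h1 h2)).trans (proj_point_eq hq' hr (le_inf h3 h4)).symm

/-- In an arrangement of 12 lines with a sextic point `p` on the lines `L₁,…,L₆`, if every
multiple point lies on `L₁ ∪ … ∪ L₆`, then every line not through `p` contains at most 5
multiple points. -/
theorem off_pencil_line_at_most_five_multiple_points (A : Finset (Submodule ℂ Vc))
    (hA : LineArrangement A) (hcard : A.card = 12)
    (p : Submodule ℂ Vc) (hp : IsProjPoint p) (hmp : mult A p = 6)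
    (L : Fin 6 → Submodule ℂ Vc) (hL : ∀ i, L i ∈ A) (hLinj : Function.Injective L)
    (hpL : ∀ i, p ≤ L i)
    (hpencil : ∀ q : Submodule ℂ Vc, IsMultPoint A q → ∃ i, q ≤ L i) :
    ∀ M ∈ A, ¬ p ≤ M → Set.ncard {q : Submodule ℂ Vc | IsMultPoint A q ∧ q ≤ M} ≤ 5 := by
  classical
  intro M hM hpM
  have hMline : IsProjLine M := hA M hM
  have hPcard : (A.filter (fun N => p ≤ N)).card = 6 := by
    have h : ({N : Submodule ℂ Vc | N ∈ A ∧ p ≤ N} : Set _)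
        = ↑(A.filter (fun N => p ≤ N)) := by ext N; simp
    rw [← hmp, mult, h, Set.ncard_coe_finset]
  have hrange : ∀ N ∈ A, p ≤ N → ∃ i, N = L i := by
    have hsub : Finset.univ.image L ⊆ A.filter (fun N => p ≤ N) := by
      intro N hN
      simp only [Finset.mem_image] at hN
      obtain ⟨i, _, rfl⟩ := hN
      simp [hL i, hpL i]
    have hcardim : (Finset.univ.image L).card = 6 := by
      rw [Finset.card_image_of_injective _ hLinj, Finset.card_univ, Fintype.card_fin]
    have heq : A.filter (fun N => p ≤ N) = Finset.univ.image L :=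
      (Finset.eq_of_subset_of_card_le hsub (by omega)).symm
    intro N hN hpN
    have hNP : N ∈ A.filter (fun N => p ≤ N) := by simp [hN, hpN]
    rw [heq] at hNP
    simp only [Finset.mem_image] at hNP
    obtain ⟨i, _, h⟩ := hNP
    exact ⟨i, h.symm⟩
  have hpinf : ∀ i j, i ≠ j → p = L i ⊓ L j := fun i j hij =>
    proj_point_eq hp (inf_line_rank (hA _ (hL i)) (hA _ (hL j)) (fun h => hij (hLinj h)))
      (le_inf (hpL i) (hpL j))
  have hScard : ((A.filter (fun N => ¬ p ≤ N)).erase M).card = 5 := by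
    have h1 : (A.filter (fun N => p ≤ N)).card + (A.filter (fun N => ¬ p ≤ N)).card = 12 := by
      rw [Finset.card_filter_add_card_filter_not, hcard]
    have hMQ : M ∈ A.filter (fun N => ¬ p ≤ N) := by simp [hM, hpM]
    rw [Finset.card_erase_of_mem hMQ]
    omega
  -- key: each multiple point on M lies on some line of the erase-set
  have hkey : ∀ q ∈ {q : Submodule ℂ Vc | IsMultPoint A q ∧ q ≤ M},
      ∃ N ∈ (A.filter (fun N => ¬ p ≤ N)).erase M, q ≤ N := by
    rintro q ⟨⟨hqpt, hqmult⟩, hqM⟩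
    obtain ⟨i0, hi0⟩ := hpencil q ⟨hqpt, hqmult⟩
    have hqnep : q ≠ p := fun h => hpM (h ▸ hqM)
    by_contra hno
    push_neg at hno
    have hsub : A.filter (fun N => q ≤ N) ⊆ {M, L i0} := by
      intro N hN
      simp only [Finset.mem_filter] at hN
      obtain ⟨hNA, hqN⟩ := hN
      by_cases hpN : p ≤ N
      · obtain ⟨j, rfl⟩ := hrange N hNA hpN
        rcases eq_or_ne j i0 with rfl | hji
        · simp
        · exfalso
          have hle : q ≤ L j ⊓ L i0 := le_inf hqN hi0
          rw [← hpinf j i0 hji] at hle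
          exact hqnep (proj_point_eq hqpt hp hle)
      · rcases eq_or_ne N M with rfl | hNM
        · simp
        · exact absurd hqN (hno N (by simp [Finset.mem_erase, hNM, hNA, hpN]))
    have hpair : ({M, L i0} : Finset (Submodule ℂ Vc)).card ≤ 2 :=
      le_trans (Finset.card_insert_le _ _) (by simp)
    have hle2 : (A.filter (fun N => q ≤ N)).card ≤ 2 :=
      le_trans (Finset.card_le_card hsub) hpair
    have hmq : mult A q = (A.filter (fun N => q ≤ N)).card := by
      rw [mult]
      have h : ({N : Submodule ℂ Vc | N ∈ A ∧ q ≤ N} : Set _)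
          = ↑(A.filter (fun N => q ≤ N)) := by ext N; simp
      rw [h, Set.ncard_coe_finset]
    omega
  -- injection into the erase-set
  set g : Submodule ℂ Vc → Submodule ℂ Vc := fun q =>
    if h : ∃ N ∈ (A.filter (fun N => ¬ p ≤ N)).erase M, q ≤ N then h.choose else ⊥ with hg
  have hgmem : ∀ q ∈ {q : Submodule ℂ Vc | IsMultPoint A q ∧ q ≤ M},
      g q ∈ (A.filter (fun N => ¬ p ≤ N)).erase M ∧ q ≤ g q := by
    intro q hq
    have h := hkey q hq
    rw [hg]
    simp only [dif_pos h]
    exact ⟨h.choose_spec.1, h.choose_spec.2⟩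
  have hinj : Set.InjOn g {q : Submodule ℂ Vc | IsMultPoint A q ∧ q ≤ M} := by
    intro q hq q' hq' hgq
    have h1 := hgmem q hq
    have h2 := hgmem q' hq'
    have hNS := h1.1
    have hNA : g q ∈ A := Finset.mem_of_mem_filter _ (Finset.mem_of_mem_erase hNS)
    have hNM : g q ≠ M := Finset.ne_of_mem_erase hNS
    exact unique_point hq.1.1 hq'.1.1 (hA _ hNA) hMline hNM h1.2 hq.2
      (hgq ▸ h2.2) hq'.2
  have hfin : Set.ncard {q : Submodule ℂ Vc | IsMultPoint A q ∧ q ≤ M}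
      ≤ Set.ncard (↑((A.filter (fun N => ¬ p ≤ N)).erase M) : Set (Submodule ℂ Vc)) :=
    Set.ncard_le_ncard_of_injOn g (fun q hq => (hgmem q hq).1) hinj
      (Finset.finite_toSet _)
  rwa [Set.ncard_coe_finset, hScard] at hfin
end

section
/- Let A be a nonreductive line arrangement of 12 pairwise distinct lines in ℂP² with exactly one point p of multiplicity 6, with n_4(A) = n_5(A) = 0 and n_r(A) = 0 for all r ≥ 7, and such that every point of multiplicity 3 lies on one of the six lines of A passing through p. Then no line of A that does not pass through p contains exactly 6 points of multiplicity 3 of A. -/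
open Submodule Module

set_option maxHeartbeats 1000000

lemma pt_unique {L M q q' : Submodule ℂ Vc} (hL : IsProjLine L) (hM : IsProjLine M)
    (hLM : L ≠ M) (hq : IsProjPoint q) (hq' : IsProjPoint q')
    (h1 : q ≤ L) (h2 : q ≤ M) (h3 : q' ≤ L) (h4 : q' ≤ M) : q = q' := by
  have hle := Submodule.finrank_le (L ⊔ M)
  rw [finrank_Vc] at hle
  have hlt : L < L ⊔ M := by
    refine lt_of_le_of_ne le_sup_left fun h => hLM ?_
    have hML : M ≤ L := by rw [h]; exact le_sup_right
    exact (Submodule.eq_of_le_of_finrank_eq hML (by rw [hM, hL])).symm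
  have h5 := Submodule.finrank_lt_finrank_of_lt hlt
  rw [hL] at h5
  have h6 := Submodule.finrank_sup_add_finrank_inf_eq L M
  rw [hL, hM] at h6
  have hinf : Module.finrank ℂ ↥(L ⊓ M) = 1 := by omega
  have e1 : q = L ⊓ M :=
    Submodule.eq_of_le_of_finrank_eq (le_inf h1 h2) (by rw [hq, hinf])
  have e2 : q' = L ⊓ M :=
    Submodule.eq_of_le_of_finrank_eq (le_inf h3 h4) (by rw [hq', hinf])
  rw [e1, e2]

/-- In a nonreductive arrangement of 12 lines with exactly one sextic point `p`,
`n₄ = n₅ = 0`, `n_r = 0` for `r ≥ 7`, and all triple points on the pencil of `p`, no line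
avoiding `p` contains exactly 6 triple points. -/
theorem no_line_with_six_triple_points (A : Finset (Submodule ℂ Vc))
    (hA : LineArrangement A) (hcard : A.card = 12) (hnr : Nonreductive A)
    (p : Submodule ℂ Vc) (hp : IsProjPoint p) (hmp : mult A p = 6)
    (h6 : nPts A 6 = 1) (h4 : nPts A 4 = 0) (h5 : nPts A 5 = 0)
    (h7 : ∀ r, 7 ≤ r → nPts A r = 0)
    (hpencil : ∀ q : Submodule ℂ Vc, IsProjPoint q → mult A q = 3 →
      ∃ L ∈ A, p ≤ L ∧ q ≤ L) :
    ∀ M ∈ A, ¬ p ≤ M →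
      Set.ncard {q : Submodule ℂ Vc | IsProjPoint q ∧ mult A q = 3 ∧ q ≤ M} ≠ 6 := by
  classical
  intro M hM hpM hT6
  set T : Set (Submodule ℂ Vc) := {q | IsProjPoint q ∧ mult A q = 3 ∧ q ≤ M} with hTdef
  have hMline : IsProjLine M := hA M hM
  -- every triple point of M has a third line avoiding p and distinct from M
  have key : ∀ q ∈ T, ∃ N, N ∈ A ∧ q ≤ N ∧ ¬ p ≤ N ∧ N ≠ M := by
    rintro q ⟨hqpt, hq3, hqM⟩
    obtain ⟨L, hLA, hpL, hqL⟩ := hpencil q hqpt hq3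
    have hLM : L ≠ M := fun h => hpM (h ▸ hpL)
    have hS3 : {N | N ∈ A ∧ q ≤ N}.ncard = 3 := hq3
    have hsub : ¬ ({N | N ∈ A ∧ q ≤ N} ⊆ {M, L}) := by
      intro hsub
      have hc1 := Set.ncard_le_ncard hsub ((Set.finite_singleton L).insert M)
      have hc2 : ({M, L} : Set (Submodule ℂ Vc)).ncard ≤ 2 := by
        have := Set.ncard_insert_le M ({L} : Set (Submodule ℂ Vc))
        simpa using this
      omega
    obtain ⟨N, hNS, hNnot⟩ := Set.not_subset.mp hsub
    have hNM : N ≠ M := fun h => hNnot (by simp [h])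
    have hNL : N ≠ L := fun h => hNnot (by simp [h])
    refine ⟨N, hNS.1, hNS.2, fun hpN => ?_, hNM⟩
    have hpq : p = q :=
      pt_unique (hA N hNS.1) (hA L hLA) hNL hp hqpt hpN hpL hNS.2 hqL
    exact hpM (hpq ▸ hqM)
  -- there are exactly 5 lines of A avoiding p other than M
  have hPcoe : {L | L ∈ A ∧ p ≤ L} = ↑(A.filter fun L => p ≤ L) := by
    ext N; simp [Finset.mem_filter]
  have hP6 : (A.filter fun L => p ≤ L).card = 6 := by
    have := hmp
    rw [mult, hPcoe, Set.ncard_coe_finset] at this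
    exact this
  have hfil := Finset.card_filter_add_card_filter_not
    (s := A) (p := fun L => p ≤ L)
  have hQ6 : (A.filter fun N => ¬ p ≤ N).card = 6 := by
    rw [hP6, hcard] at hfil; omega
  have hMmem : M ∈ A.filter fun N => ¬ p ≤ N := Finset.mem_filter.mpr ⟨hM, hpM⟩
  set B : Finset (Submodule ℂ Vc) := (A.filter fun N => ¬ p ≤ N).erase M with hBdef
  have hB5 : B.card = 5 := by
    rw [hBdef, Finset.card_erase_of_mem hMmem, hQ6]
  -- T is finite with 6 elements
  have hTfin : T.Finite := by
    by_contra hinf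
    rw [Set.Infinite.ncard (fun h => hinf h)] at hT6
    omega
  set s : Finset (Submodule ℂ Vc) := hTfin.toFinset with hsdef
  have hs6 : s.card = 6 := by
    rw [hsdef, ← Set.ncard_eq_toFinset_card T hTfin]
    exact hT6
  -- choice of the third line as a function
  have key' : ∀ q : Submodule ℂ Vc, ∃ N, q ∈ T →
      N ∈ A ∧ q ≤ N ∧ ¬ p ≤ N ∧ N ≠ M := by
    intro q
    by_cases h : q ∈ T
    · obtain ⟨N, hN⟩ := key q h
      exact ⟨N, fun _ => hN⟩
    · exact ⟨⊥, fun h' => absurd h' h⟩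
  choose g hg using key'
  have hmaps : ∀ q ∈ s, g q ∈ B := by
    intro q hq
    have hqT : q ∈ T := hTfin.mem_toFinset.mp hq
    obtain ⟨hNA, _, hpN, hNM⟩ := hg q hqT
    exact Finset.mem_erase.mpr ⟨hNM, Finset.mem_filter.mpr ⟨hNA, hpN⟩⟩
  have hlt : B.card < s.card := by rw [hB5, hs6]; omega
  obtain ⟨x, hx, y, hy, hxy, hgxy⟩ :=
    Finset.exists_ne_map_eq_of_card_lt_of_maps_to hlt hmaps
  have hxT : x ∈ T := hTfin.mem_toFinset.mp hx
  have hyT : y ∈ T := hTfin.mem_toFinset.mp hy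
  obtain ⟨hNA, hxN, _, hNM⟩ := hg x hxT
  obtain ⟨_, hyN, _, _⟩ := hg y hyT
  rw [hgxy] at hxN hNA hNM
  exact hxy (pt_unique (hA (g y) hNA) hMline hNM hxT.1 hyT.1 hxN hxT.2.2 hyN hyT.2.2)
end
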